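/- Let Ĉ be PSD with localization states M̂_k = max_{i,j}|Ĉ_{i,j}| λ_A^{−(𝐝(i,j)∧k)} (0 < λ_A < 1), σ_o > 0, and observations at sparse locations {o_1,…,o_q} with 𝐝(o_i,o_j) > 2l for i ≠ j, so each index i has at most one observed location o(i) within distance l. Define the localized-Kalman-update posterior covariance C with entries given (for unobservable corrections removed) by C_{i,j} = Ĉ_{i,j} − Ĉ_{i,o(i)}Ĉ_{j,o(i)}/(σ_o²+Ĉ_{o(i),o(i)}) − Ĉ_{i,o(j)}Ĉ_{j,o(j)}/(σ_o²+Ĉ_{o(j),o(j)}) + Ĉ_{i,o(i)}Ĉ_{j,o(j)}Ĉ_{o(i),o(j)}/((σ_o²+Ĉ_{o(i),o(i)})(σ_o²+Ĉ_{o(j),o(j)})) + σ_o² Ĉ_{i,o(i)}Ĉ_{j,o(i)}/(σ_o²+Ĉ_{o(i),o(i)})² · 1_{o(i)=o(j)}. Then the posterior localization states satisfy M_k ≤ φ(M̂_k) with φ(M) = M(1 + σ_o^{-2} M)² + σ_o^{-2} M². -/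

import Mathlib

open Matrix BigOperators Real

/-- The localization state of a covariance matrix at radius k. -/
noncomputable def locState {d : ℕ} (C : Matrix (Fin d) (Fin d) ℝ)
    (dd : Fin d → Fin d → ℝ) (lam : ℝ) (k : ℕ) : ℝ :=
  ⨆ i : Fin d, ⨆ j : Fin d, |C i j| * lam ^ (-(min (dd i j) (k : ℝ)))

/-- Localized Kalman analysis step with sparse observations: the posterior
localization states satisfy M_k ≤ φ(M̂_k) with
φ(M) = M (1 + σ_o⁻² M)² + σ_o⁻² M². -/
theorem analysis_step_localization {d q : ℕ}
    (dd : Fin d → Fin d → ℝ)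
    (hdd_self : ∀ i j, dd i j = 0 ↔ i = j)
    (hdd_symm : ∀ i j, dd i j = dd j i)
    (hdd_tri : ∀ i j k, dd i k ≤ dd i j + dd j k)
    (lam : ℝ) (hlam : 0 < lam) (hlam1 : lam < 1)
    (l : ℝ) (hl : 0 ≤ l) (σo : ℝ) (hσ : 0 < σo)
    (Chat : Matrix (Fin d) (Fin d) ℝ) (hChat : Chat.PosSemidef)
    (obs : Fin q → Fin d) (hobs_inj : Function.Injective obs)
    (hsparse : ∀ a b : Fin q, a ≠ b → 2 * l < dd (obs a) (obs b))
    (oi : Fin d → Option (Fin d))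
    (hoi_some : ∀ i o', oi i = some o' → (∃ a, obs a = o') ∧ dd i o' ≤ l)
    (hoi_comp : ∀ i (a : Fin q), dd i (obs a) ≤ l → oi i = some (obs a))
    (C : Matrix (Fin d) (Fin d) ℝ)
    (hCpost : ∀ i j, C i j =
      Chat i j
      - (match oi i with
         | some o => Chat i o * Chat j o / (σo ^ 2 + Chat o o)
         | none => 0)
      - (match oi j with
         | some o => Chat i o * Chat j o / (σo ^ 2 + Chat o o)
         | none => 0)
      + (match oi i, oi j with
         | some o1, some o2 =>
             Chat i o1 * Chat j o2 * Chat o1 o2 /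
               ((σo ^ 2 + Chat o1 o1) * (σo ^ 2 + Chat o2 o2))
         | _, _ => 0)
      + (match oi i, oi j with
         | some o1, some o2 =>
             if o1 = o2 then
               σo ^ 2 * Chat i o1 * Chat j o1 / (σo ^ 2 + Chat o1 o1) ^ 2
             else 0
         | _, _ => 0)) :
    ∀ k : ℕ, locState C dd lam k ≤
      locState Chat dd lam k * (1 + σo⁻¹ ^ 2 * locState Chat dd lam k) ^ 2 +
        σo⁻¹ ^ 2 * locState Chat dd lam k ^ 2 := by
  intro k
  by_cases hde : IsEmpty (Fin d)
  · simp [locState, Real.iSup_of_isEmpty]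
  have hne : Nonempty (Fin d) := not_isEmpty_iff.mp hde
  set M := locState Chat dd lam k with hM
  set x := σo⁻¹ ^ 2 with hx
  have hx0 : 0 < x := by positivity
  have hdnn : ∀ i j, 0 ≤ dd i j := by
    intro i j
    have h1 := hdd_tri i j i
    rw [(hdd_self i i).mpr rfl, hdd_symm j i] at h1
    linarith
  set w : Fin d → Fin d → ℝ := fun i j => lam ^ (-(min (dd i j) (k : ℝ))) with hwdef
  have hw0 : ∀ i j, 0 < w i j := fun i j => Real.rpow_pos_of_pos hlam _
  have hwsymm : ∀ i j, w i j = w j i := by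
    intro i j; simp only [hwdef]; rw [hdd_symm]
  have hmin : ∀ (a b : ℝ), 0 ≤ a → 0 ≤ b → min (a + b) (k : ℝ) ≤ min a k + min b k := by
    intro a b ha hb
    rcases le_total a (k : ℝ) with h | h
    · rcases le_total b (k : ℝ) with h' | h'
      · rw [min_eq_left h, min_eq_left h']; exact min_le_left _ _
      · rw [min_eq_left h, min_eq_right h']
        have := min_le_right (a + b) (k : ℝ); linarith
    · rw [min_eq_right h]
      have h2 : (0 : ℝ) ≤ min b (k : ℝ) := le_min hb (Nat.cast_nonneg k)
      have := min_le_right (a + b) (k : ℝ); linarith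
  have hwmul : ∀ i m j, w i j ≤ w i m * w m j := by
    intro i m j
    simp only [hwdef]
    rw [← Real.rpow_add hlam]
    apply Real.rpow_le_rpow_of_exponent_ge hlam hlam1.le
    have h1 : min (dd i j) (k : ℝ) ≤ min (dd i m + dd m j) (k : ℝ) :=
      min_le_min (hdd_tri i m j) le_rfl
    have h2 := hmin (dd i m) (dd m j) (hdnn i m) (hdnn m j)
    linarith
  have hboundM : ∀ i j, |Chat i j| * w i j ≤ M := by
    intro i j
    rw [hM]
    unfold locState
    have h1 : |Chat i j| * w i j ≤ ⨆ j', |Chat i j'| * lam ^ (-(min (dd i j') (k : ℝ))) :=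
      le_ciSup (f := fun j' => |Chat i j'| * lam ^ (-(min (dd i j') (k : ℝ))))
        (Finite.bddAbove_range _) j
    exact h1.trans (le_ciSup
      (f := fun i' => ⨆ j', |Chat i' j'| * lam ^ (-(min (dd i' j') (k : ℝ))))
      (Finite.bddAbove_range _) i)
  have hM0 : 0 ≤ M := by
    obtain ⟨i⟩ := hne
    exact le_trans (by positivity) (hboundM i i)
  have hdiag : ∀ o : Fin d, 0 ≤ Chat o o := by
    intro o
    exact hChat.diag_nonneg
  have hDpos : ∀ o : Fin d, 0 < σo ^ 2 + Chat o o := by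
    intro o; have := hdiag o; positivity
  have hDinv : ∀ o : Fin d, (σo ^ 2 + Chat o o)⁻¹ ≤ x := by
    intro o
    have h1 : (σo ^ 2 + Chat o o)⁻¹ ≤ (σo ^ 2)⁻¹ :=
      inv_anti₀ (by positivity) (by linarith [hdiag o])
    have h2 : (σo ^ 2)⁻¹ = x := by rw [hx]; rw [inv_pow]
    linarith
  have habs5 : ∀ a b c e f : ℝ, |a - b - c + e + f| ≤ |a| + |b| + |c| + |e| + |f| := by
    intro a b c e f
    have h1 := abs_add_le (a - b - c + e) f
    have h2 := abs_add_le (a - b - c) e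
    have h3 := abs_sub (a - b) c
    have h4 := abs_sub a b
    linarith
  have hmain : ∀ i j, |C i j| * w i j ≤ M + 3 * x * M ^ 2 + x ^ 2 * M ^ 3 := by
    intro i j
    have hprod2 : ∀ o, |Chat i o| * |Chat j o| * w i j ≤ M ^ 2 := by
      intro o
      calc |Chat i o| * |Chat j o| * w i j
          ≤ |Chat i o| * |Chat j o| * (w i o * w o j) :=
            mul_le_mul_of_nonneg_left (hwmul i o j) (by positivity)
        _ = (|Chat i o| * w i o) * (|Chat j o| * w j o) := by rw [hwsymm o j]; ring
        _ ≤ M * M := mul_le_mul (hboundM i o) (hboundM j o) (by positivity) hM0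
        _ = M ^ 2 := (sq M).symm
    have hprod3 : ∀ o1 o2, |Chat i o1| * |Chat j o2| * |Chat o1 o2| * w i j ≤ M ^ 3 := by
      intro o1 o2
      have hsplit : w i j ≤ w i o1 * (w o1 o2 * w o2 j) := by
        calc w i j ≤ w i o1 * w o1 j := hwmul i o1 j
          _ ≤ w i o1 * (w o1 o2 * w o2 j) :=
            mul_le_mul_of_nonneg_left (hwmul o1 o2 j) (hw0 i o1).le
      calc |Chat i o1| * |Chat j o2| * |Chat o1 o2| * w i j
          ≤ |Chat i o1| * |Chat j o2| * |Chat o1 o2| * (w i o1 * (w o1 o2 * w o2 j)) :=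
            mul_le_mul_of_nonneg_left hsplit (by positivity)
        _ = (|Chat i o1| * w i o1) * ((|Chat o1 o2| * w o1 o2) * (|Chat j o2| * w j o2)) := by
            rw [hwsymm o2 j]; ring
        _ ≤ M * (M * M) :=
            mul_le_mul (hboundM i o1)
              (mul_le_mul (hboundM o1 o2) (hboundM j o2) (by positivity) hM0)
              (by positivity) hM0
        _ = M ^ 3 := by ring
    have hT1 : ∀ o, |Chat i o * Chat j o / (σo ^ 2 + Chat o o)| * w i j ≤ x * M ^ 2 := by
      intro o
      rw [abs_div, abs_mul, abs_of_pos (hDpos o), div_eq_mul_inv]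
      calc |Chat i o| * |Chat j o| * (σo ^ 2 + Chat o o)⁻¹ * w i j
          = (|Chat i o| * |Chat j o| * w i j) * (σo ^ 2 + Chat o o)⁻¹ := by ring
        _ ≤ M ^ 2 * x :=
            mul_le_mul (hprod2 o) (hDinv o) (inv_nonneg.mpr (hDpos o).le) (sq_nonneg M)
        _ = x * M ^ 2 := by ring
    have hT3 : ∀ o1 o2,
        |Chat i o1 * Chat j o2 * Chat o1 o2 /
          ((σo ^ 2 + Chat o1 o1) * (σo ^ 2 + Chat o2 o2))| * w i j ≤ x ^ 2 * M ^ 3 := by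
      intro o1 o2
      rw [abs_div, abs_mul, abs_mul, abs_of_pos (mul_pos (hDpos o1) (hDpos o2)),
        div_eq_mul_inv, mul_inv]
      have hDD : (σo ^ 2 + Chat o1 o1)⁻¹ * (σo ^ 2 + Chat o2 o2)⁻¹ ≤ x * x :=
        mul_le_mul (hDinv o1) (hDinv o2) (inv_nonneg.mpr (hDpos o2).le) hx0.le
      calc |Chat i o1| * |Chat j o2| * |Chat o1 o2| *
            ((σo ^ 2 + Chat o1 o1)⁻¹ * (σo ^ 2 + Chat o2 o2)⁻¹) * w i j
          = (|Chat i o1| * |Chat j o2| * |Chat o1 o2| * w i j) *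
            ((σo ^ 2 + Chat o1 o1)⁻¹ * (σo ^ 2 + Chat o2 o2)⁻¹) := by ring
        _ ≤ M ^ 3 * (x * x) :=
            mul_le_mul (hprod3 o1 o2) hDD
              (mul_nonneg (inv_nonneg.mpr (hDpos o1).le) (inv_nonneg.mpr (hDpos o2).le))
              (pow_nonneg hM0 3)
        _ = x ^ 2 * M ^ 3 := by ring
    have hT4 : ∀ o, |σo ^ 2 * Chat i o * Chat j o / (σo ^ 2 + Chat o o) ^ 2| * w i j
        ≤ x * M ^ 2 := by
      intro o
      have hD2 : σo ^ 2 * ((σo ^ 2 + Chat o o) ^ 2)⁻¹ ≤ x := by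
        have h1 : (σo ^ 2) ^ 2 ≤ (σo ^ 2 + Chat o o) ^ 2 := by
          nlinarith [hdiag o, sq_nonneg σo]
        have h2 : ((σo ^ 2 + Chat o o) ^ 2)⁻¹ ≤ ((σo ^ 2) ^ 2)⁻¹ :=
          inv_anti₀ (by positivity) h1
        have h3 : σo ^ 2 * ((σo ^ 2) ^ 2)⁻¹ = x := by
          rw [hx]; field_simp
        have h4 := mul_le_mul_of_nonneg_left h2 (sq_nonneg σo)
        linarith
      rw [abs_div, abs_mul, abs_mul, abs_of_pos (show (0:ℝ) < σo ^ 2 by positivity),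
        abs_of_pos (pow_pos (hDpos o) 2), div_eq_mul_inv]
      calc σo ^ 2 * |Chat i o| * |Chat j o| * ((σo ^ 2 + Chat o o) ^ 2)⁻¹ * w i j
          = (|Chat i o| * |Chat j o| * w i j) * (σo ^ 2 * ((σo ^ 2 + Chat o o) ^ 2)⁻¹) := by
            ring
        _ ≤ M ^ 2 * x :=
            mul_le_mul (hprod2 o) hD2
              (mul_nonneg (sq_nonneg σo) (inv_nonneg.mpr (pow_pos (hDpos o) 2).le))
              (sq_nonneg M)
        _ = x * M ^ 2 := by ring
    have hxM2 : 0 ≤ x * M ^ 2 := by positivity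
    have hx2M3 : 0 ≤ x ^ 2 * M ^ 3 := by positivity
    rw [hCpost i j]
    have hz1 : |(0:ℝ)| * w i j ≤ x * M ^ 2 := by
      rw [abs_zero, zero_mul]; exact hxM2
    have hz2 : |(0:ℝ)| * w i j ≤ x ^ 2 * M ^ 3 := by
      rw [abs_zero, zero_mul]; exact hx2M3
    have hcomb : ∀ a b c e f : ℝ, |a| * w i j ≤ M → |b| * w i j ≤ x * M ^ 2 →
        |c| * w i j ≤ x * M ^ 2 → |e| * w i j ≤ x ^ 2 * M ^ 3 → |f| * w i j ≤ x * M ^ 2 →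
        |a - b - c + e + f| * w i j ≤ M + 3 * x * M ^ 2 + x ^ 2 * M ^ 3 := by
      intro a b c e f ha hb hc he hf
      calc |a - b - c + e + f| * w i j
          ≤ (|a| + |b| + |c| + |e| + |f|) * w i j :=
            mul_le_mul_of_nonneg_right (habs5 a b c e f) (hw0 i j).le
        _ = |a| * w i j + |b| * w i j + |c| * w i j + |e| * w i j + |f| * w i j := by ring
        _ ≤ M + x * M ^ 2 + x * M ^ 2 + x ^ 2 * M ^ 3 + x * M ^ 2 := by linarith
        _ = M + 3 * x * M ^ 2 + x ^ 2 * M ^ 3 := by ring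
    rcases hi : oi i with _ | o1 <;> rcases hj : oi j with _ | o2 <;>
      simp only [hi, hj]
    · exact hcomb _ 0 0 0 0 (hboundM i j) hz1 hz1 hz2 hz1
    · exact hcomb _ 0 _ 0 0 (hboundM i j) hz1 (hT1 o2) hz2 hz1
    · exact hcomb _ _ 0 0 0 (hboundM i j) (hT1 o1) hz1 hz2 hz1
    · by_cases ho : o1 = o2
      · subst ho
        rw [if_pos rfl]
        exact hcomb _ _ _ _ _ (hboundM i j) (hT1 o1) (hT1 o1) (hT3 o1 o1) (hT4 o1)
      · rw [if_neg ho]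
        exact hcomb _ _ _ _ 0 (hboundM i j) (hT1 o1) (hT1 o2) (hT3 o1 o2) hz1
  have htarget : M * (1 + x * M) ^ 2 + x * M ^ 2 = M + 3 * x * M ^ 2 + x ^ 2 * M ^ 3 := by
    ring
  rw [htarget]
  unfold locState
  exact ciSup_le fun i => ciSup_le fun j => hmain i j
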